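/- Let K_s⁺(u,v) = K_s(u,v) if 0 < v < u < 1 and 0 otherwise, where K_s is the Bernoulli φ_s-divergence. For any s ≤ 2 with s ≠ 1 and any 0 < v ≤ u < 1, K_s⁺(u,v) ≥ K_2⁺(u,v)·[1 − (1−v)(1 − (v/u)^{2−s})]; and for s = 1, K_1⁺(u,v) ≥ K_2⁺(u,v)·(v/u). -/

import Mathlib

open Real Set

/-- The Cressie–Read / φ-divergence generator family `φ_s`. -/
noncomputable def phiGen (s x : ℝ) : ℝ :=
  if s = 1 then x * Real.log x - x + 1
  else if s = 0 then -Real.log x + x - 1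
  else (1 - s + s * x - x ^ s) / (s * (1 - s))

/-- The `φ_s`-divergence between `Bernoulli(u)` and `Bernoulli(v)`. -/
noncomputable def Kdiv (s u v : ℝ) : ℝ :=
  v * phiGen s (u / v) + (1 - v) * phiGen s ((1 - u) / (1 - v))

/-- The truncated divergence `K_s⁺(u,v)`, which is `K_s(u,v)` when `0 < v < u < 1`
and `0` otherwise. -/
noncomputable def Kplus (s u v : ℝ) : ℝ :=
  if 0 < v ∧ v < u ∧ u < 1 then Kdiv s u v else 0

/-- Comparison of `K_s⁺` with `K_2⁺`: for `s ≤ 2`, `s ≠ 1` and `0 < v ≤ u < 1`,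
`K_s⁺(u,v) ≥ K_2⁺(u,v)·[1 − (1−v)(1 − (v/u)^{2−s})]`, and for `s = 1`,
`K_1⁺(u,v) ≥ K_2⁺(u,v)·(v/u)`. -/
noncomputable def phiD (s x : ℝ) : ℝ :=
  if s = 1 then Real.log x else (1 - x ^ (s - 1)) / (1 - s)

lemma phiGen_one (s : ℝ) : phiGen s 1 = 0 := by
  unfold phiGen
  split_ifs with h1 h0 <;> simp

lemma phiD_one (s : ℝ) : phiD s 1 = 0 := by
  unfold phiD
  split_ifs with h1 <;> simp

lemma hasDerivAt_phiGen (s : ℝ) {x : ℝ} (hx : 0 < x) :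
    HasDerivAt (phiGen s) (phiD s x) x := by
  rcases eq_or_ne s 1 with rfl | h1
  · have : HasDerivAt (fun y : ℝ => y * Real.log y - y + 1) (Real.log x) x := by
      have h := (Real.hasDerivAt_mul_log hx.ne').sub (hasDerivAt_id x)
      have h2 := h.add_const 1
      refine h2.congr_deriv ?_
      ring
    have he : (fun y : ℝ => y * Real.log y - y + 1) = phiGen 1 := by
      funext y; simp [phiGen]
    rw [he] at this
    simpa [phiD] using this
  rcases eq_or_ne s 0 with rfl | h0
  · have : HasDerivAt (fun y : ℝ => -Real.log y + y - 1) (-x⁻¹ + 1) x := by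
      have h := ((Real.hasDerivAt_log hx.ne').neg.add (hasDerivAt_id x)).sub_const 1
      simpa using h
    have he : (fun y : ℝ => -Real.log y + y - 1) = phiGen 0 := by
      funext y; simp [phiGen]
    rw [he] at this
    convert this using 1
    rw [phiD]
    rw [if_neg one_ne_zero.symm]
    rw [show (0:ℝ) - 1 = -1 by norm_num, Real.rpow_neg_one]
    ring
  · have hpow : HasDerivAt (fun y : ℝ => y ^ s) (s * x ^ (s - 1)) x :=
      Real.hasDerivAt_rpow_const (Or.inl hx.ne')
    have h := ((((hasDerivAt_id x).const_mul s).const_add (1 - s)).sub hpow).div_const (s * (1 - s))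
    simp only [id_eq, Pi.sub_apply] at h
    have he : (fun y : ℝ => (1 - s + s * y - y ^ s) / (s * (1 - s))) = phiGen s := by
      funext y; simp [phiGen, h1, h0]
    rw [he] at h
    refine h.congr_deriv ?_
    rw [phiD, if_neg h1]
    have hs1 : (1 : ℝ) - s ≠ 0 := by intro h; apply h1; linarith
    field_simp

lemma hasDerivAt_phiD (s : ℝ) {x : ℝ} (hx : 0 < x) :
    HasDerivAt (phiD s) (x ^ (s - 2)) x := by
  rcases eq_or_ne s 1 with rfl | h1
  · have h := Real.hasDerivAt_log hx.ne'
    have he : Real.log = phiD 1 := by funext y; simp [phiD]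
    rw [he] at h
    convert h using 1
    rw [show (1 : ℝ) - 2 = -1 by norm_num, Real.rpow_neg_one]
  · have hpow : HasDerivAt (fun y : ℝ => y ^ (s - 1)) ((s - 1) * x ^ (s - 1 - 1)) x :=
      Real.hasDerivAt_rpow_const (Or.inl hx.ne')
    have h : HasDerivAt (fun y : ℝ => (1 - y ^ (s - 1)) / (1 - s))
        ((-((s - 1) * x ^ (s - 1 - 1))) / (1 - s)) x := by
      have := (hpow.const_sub 1).div_const (1 - s)
      simpa using this
    have he : (fun y : ℝ => (1 - y ^ (s - 1)) / (1 - s)) = phiD s := by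
      funext y; simp [phiD, h1]
    rw [he] at h
    convert h using 1
    have hs1 : (1 : ℝ) - s ≠ 0 := by intro h; apply h1; linarith
    rw [show s - 1 - 1 = s - 2 by ring]
    field_simp
    ring

lemma Kdiv_self (s v : ℝ) (hv : v ≠ 0) (hv1 : v ≠ 1) : Kdiv s v v = 0 := by
  simp [Kdiv, div_self hv, div_self (sub_ne_zero.mpr (Ne.symm hv1)), phiGen_one]

lemma Kdiv_ge (s v u c : ℝ) (hv : 0 < v) (hvu : v < u) (hu : u < 1)
    (hbound : ∀ t ∈ Icc v u, c ≤ (t / v) ^ (s - 2) / v + ((1 - t) / (1 - v)) ^ (s - 2) / (1 - v)) :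
    c * (u - v) ^ 2 / 2 ≤ Kdiv s u v := by
  have hv1 : v < 1 := hvu.trans hu
  have h1v : 0 < 1 - v := by linarith
  set G' : ℝ → ℝ := fun t => phiD s (t / v) - phiD s ((1 - t) / (1 - v)) with hG'def
  set F : ℝ → ℝ := fun t => Kdiv s t v - c * (t - v) ^ 2 / 2 with hFdef
  set F' : ℝ → ℝ := fun t => G' t - c * (t - v) with hF'def
  have hmem : ∀ t ∈ Icc v u, 0 < t / v ∧ 0 < (1 - t) / (1 - v) := by
    intro t ht
    obtain ⟨h1, h2⟩ := ht
    exact ⟨div_pos (lt_of_lt_of_le hv h1) hv, div_pos (by linarith) h1v⟩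
  -- derivative of inner affine maps
  have hin1 : ∀ t : ℝ, HasDerivAt (fun t : ℝ => t / v) (1 / v) t := fun t =>
    (hasDerivAt_id t).div_const v
  have hin2 : ∀ t : ℝ, HasDerivAt (fun t : ℝ => (1 - t) / (1 - v)) ((0 - 1) / (1 - v)) t :=
    fun t => ((hasDerivAt_const t 1).sub (hasDerivAt_id t)).div_const (1 - v)
  have hF : ∀ t ∈ Icc v u, HasDerivAt F (F' t) t := by
    intro t ht
    obtain ⟨hp1, hp2⟩ := hmem t ht
    have hA := ((hasDerivAt_phiGen s hp1).comp t (hin1 t)).const_mul v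
    have hB := ((hasDerivAt_phiGen s hp2).comp t (hin2 t)).const_mul (1 - v)
    have hQ : HasDerivAt (fun t : ℝ => c * (t - v) ^ 2 / 2) (c * (2 * (t - v) ^ 1 * 1) / 2) t :=
      ((((hasDerivAt_id t).sub_const v).pow 2).const_mul c).div_const 2
    simp only [Function.comp_def] at hA hB
    have h := (hA.add hB).sub hQ
    have he : F = fun t => v * phiGen s (t / v) + (1 - v) * phiGen s ((1 - t) / (1 - v)) -
        c * (t - v) ^ 2 / 2 := by
      funext t; simp [hFdef, Kdiv]
    rw [he]
    refine h.congr_deriv ?_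
    simp only [hF'def, hG'def]
    field_simp
    ring
  have hF' : ∀ t ∈ Icc v u, HasDerivAt F'
      ((t / v) ^ (s - 2) / v + ((1 - t) / (1 - v)) ^ (s - 2) / (1 - v) - c) t := by
    intro t ht
    obtain ⟨hp1, hp2⟩ := hmem t ht
    have hA := (hasDerivAt_phiD s hp1).comp t (hin1 t)
    have hB := (hasDerivAt_phiD s hp2).comp t (hin2 t)
    have hQ : HasDerivAt (fun t : ℝ => c * (t - v)) (c * 1) t :=
      ((hasDerivAt_id t).sub_const v).const_mul c
    simp only [Function.comp_def] at hA hB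
    have h := (hA.sub hB).sub hQ
    have he : F' = fun t => phiD s (t / v) - phiD s ((1 - t) / (1 - v)) - c * (t - v) := by
      funext t; simp [hF'def, hG'def]
    rw [he]
    refine h.congr_deriv ?_
    field_simp
    ring
  have hIcc : Convex ℝ (Icc v u) := convex_Icc v u
  have hint : interior (Icc v u) = Ioo v u := interior_Icc
  -- F' is monotone on Icc v u
  have hF'mono : MonotoneOn F' (Icc v u) := by
    apply monotoneOn_of_hasDerivWithinAt_nonneg hIcc
    · exact fun t ht => (hF' t ht).continuousAt.continuousWithinAt
    · intro t ht
      rw [hint] at ht ⊢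
      exact (hF' t (Ioo_subset_Icc_self ht)).hasDerivWithinAt
    · intro t ht
      rw [hint] at ht
      have := hbound t (Ioo_subset_Icc_self ht)
      linarith
  have hF'v : F' v = 0 := by
    simp [hF'def, hG'def, div_self hv.ne', div_self h1v.ne', phiD_one]
  have hF'nonneg : ∀ t ∈ Icc v u, 0 ≤ F' t := by
    intro t ht
    have := hF'mono (left_mem_Icc.mpr hvu.le) ht ht.1
    rw [hF'v] at this
    exact this
  have hFmono : MonotoneOn F (Icc v u) := by
    apply monotoneOn_of_hasDerivWithinAt_nonneg hIcc
    · exact fun t ht => (hF t ht).continuousAt.continuousWithinAt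
    · intro t ht
      rw [hint] at ht ⊢
      exact (hF t (Ioo_subset_Icc_self ht)).hasDerivWithinAt
    · intro t ht
      rw [hint] at ht
      exact hF'nonneg t (Ioo_subset_Icc_self ht)
  have hFv : F v = 0 := by
    simp [hFdef, Kdiv_self s v hv.ne' hv1.ne]
  have := hFmono (left_mem_Icc.mpr hvu.le) (right_mem_Icc.mpr hvu.le) hvu.le
  rw [hFv] at this
  simp only [hFdef] at this
  linarith

lemma Kdiv_two (u v : ℝ) (hv : 0 < v) (hv1 : v < 1) :
    Kdiv 2 u v = (u - v) ^ 2 / (2 * (v * (1 - v))) := by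
  have h1v : (0:ℝ) < 1 - v := by linarith
  have h2 : ∀ x : ℝ, phiGen 2 x = (x - 1) ^ 2 / 2 := by
    intro x
    rw [phiGen, if_neg (by norm_num), if_neg (by norm_num)]
    rw [show ((2:ℝ)) = ((2:ℕ) : ℝ) by norm_num, Real.rpow_natCast]
    ring
  rw [Kdiv, h2, h2]
  field_simp
  ring

theorem Kplus_lower_bounds (u v : ℝ) (hv : 0 < v) (hvu : v ≤ u) (hu : u < 1) :
    (∀ s : ℝ, s ≤ 2 → s ≠ 1 →
      Kplus 2 u v * (1 - (1 - v) * (1 - (v / u) ^ ((2:ℝ) - s))) ≤ Kplus s u v) ∧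
    Kplus 2 u v * (v / u) ≤ Kplus 1 u v := by
  rcases eq_or_lt_of_le hvu with rfl | hlt
  · constructor
    · intro s _ _
      simp [Kplus, lt_irrefl]
    · simp [Kplus, lt_irrefl]
  have hv1 : v < 1 := hlt.trans hu
  have h1v : (0:ℝ) < 1 - v := by linarith
  have hu0 : 0 < u := hv.trans hlt
  have hcond : 0 < v ∧ v < u ∧ u < 1 := ⟨hv, hlt, hu⟩
  have hKp : ∀ s : ℝ, Kplus s u v = Kdiv s u v := by
    intro s; rw [Kplus, if_pos hcond]
  constructor
  · intro s hs2 hs1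
    rw [hKp, hKp, Kdiv_two u v hv hv1]
    set r := (v / u) ^ ((2:ℝ) - s) with hrdef
    have hr0 : 0 < r := Real.rpow_pos_of_pos (div_pos hv hu0) _
    have key := Kdiv_ge s v u (r / v + 1 / (1 - v)) hv hlt hu ?_
    · calc (u - v) ^ 2 / (2 * (v * (1 - v))) * (1 - (1 - v) * (1 - r))
          = (r / v + 1 / (1 - v)) * (u - v) ^ 2 / 2 := by
            field_simp
            ring
        _ ≤ Kdiv s u v := key
    · intro t ht
      obtain ⟨ht1, ht2⟩ := ht
      have ht0 : 0 < t := hv.trans_le ht1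
      have h1t : 0 < 1 - t := by linarith [ht2.trans_lt hu]
      gcongr
      · -- r ≤ (t / v) ^ (s - 2)
        have htv : 0 < t / v := div_pos ht0 hv
        have hx : (t / v) ^ (s - 2) = ((t / v) ^ ((2:ℝ) - s))⁻¹ := by
          rw [show s - 2 = -((2:ℝ) - s) by ring, Real.rpow_neg htv.le]
        rw [hx, ← one_div, le_div_iff₀ (Real.rpow_pos_of_pos htv _)]
        rw [hrdef, ← Real.mul_rpow (by positivity) (by positivity)]
        apply Real.rpow_le_one (by positivity) _ (by linarith)
        rw [div_mul_div_comm]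
        apply div_le_one_of_le₀ _ (by positivity)
        nlinarith
      · -- 1 ≤ ((1 - t) / (1 - v)) ^ (s - 2)
        apply Real.one_le_rpow_of_pos_of_le_one_of_nonpos
        · exact div_pos h1t h1v
        · apply div_le_one_of_le₀ (by linarith) h1v.le
        · linarith
  · rw [hKp, hKp, Kdiv_two u v hv hv1]
    have key := Kdiv_ge 1 v u (1 / (u * (1 - v))) hv hlt hu ?_
    · calc (u - v) ^ 2 / (2 * (v * (1 - v))) * (v / u)
          = (1 / (u * (1 - v))) * (u - v) ^ 2 / 2 := by
            field_simp
        _ ≤ Kdiv 1 u v := key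
    · intro t ht
      obtain ⟨ht1, ht2⟩ := ht
      have ht0 : 0 < t := hv.trans_le ht1
      have h1t : 0 < 1 - t := by linarith [ht2.trans_lt hu]
      have e1 : (t / v) ^ ((1:ℝ) - 2) = v / t := by
        rw [show (1:ℝ) - 2 = -1 by norm_num, Real.rpow_neg_one, inv_div]
      have e2 : ((1 - t) / (1 - v)) ^ ((1:ℝ) - 2) = (1 - v) / (1 - t) := by
        rw [show (1:ℝ) - 2 = -1 by norm_num, Real.rpow_neg_one, inv_div]
      rw [e1, e2]
      have heq : v / t / v + (1 - v) / (1 - t) / (1 - v) = 1 / (t * (1 - t)) := by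
        field_simp
        ring
      rw [heq]
      apply one_div_le_one_div_of_le (by positivity)
      nlinarith
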